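/- Let E be a Banach lattice and X a lattice normed space over E with E-valued norm ⟦·⟧, endowed with the mixed norm ‖x‖ := ‖⟦x⟧‖_E. Then (X, ‖·‖) is a Banach space if and only if X is E-uniformly complete. -/

import Mathlib

/-- `(u_n)` is `E`-uniformly Cauchy w.r.t. the `E`-valued norm `ν`. -/
def EUnifCauchy {X E : Type*} [AddCommGroup X] [NormedAddCommGroup E] [Lattice E] [HasSolidNorm E]
    [IsOrderedAddMonoid E]
    [Module ℝ E] (ν : X → E) (u : ℕ → X) : Prop :=
  ∃ e : E, 0 ≤ e ∧ ∀ ε : ℝ, 0 < ε → ∃ N : ℕ, ∀ m ≥ N, ∀ n ≥ N,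
    ν (u m - u n) ≤ ε • e

/-- `(u_n)` is `E`-uniformly convergent to `x` w.r.t. the `E`-valued norm `ν`. -/
def EUnifConv {X E : Type*} [AddCommGroup X] [NormedAddCommGroup E] [Lattice E] [HasSolidNorm E]
    [IsOrderedAddMonoid E]
    [Module ℝ E] (ν : X → E) (u : ℕ → X) (x : X) : Prop :=
  ∃ e : E, 0 ≤ e ∧ ∀ ε : ℝ, 0 < ε → ∃ N : ℕ, ∀ n ≥ N, ν (x - u n) ≤ ε • e

/-- For a lattice normed space `X` over a Banach lattice `E` endowed with the
mixed norm `‖x‖ = ‖⟦x⟧‖_E`, `X` is a Banach space iff it is `E`-uniformly complete. -/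
theorem mixed_norm_complete_iff {X E : Type*} [NormedAddCommGroup X] [Module ℝ X]
    [NormedAddCommGroup E] [Lattice E] [HasSolidNorm E]
    [IsOrderedAddMonoid E] [NormedSpace ℝ E] [CompleteSpace E]
    (ν : X → E)
    (hpos : ∀ x, 0 ≤ ν x)
    (h0 : ∀ x, ν x = 0 → x = 0)
    (hsmul : ∀ (r : ℝ) (x : X), ν (r • x) = |r| • ν x)
    (htri : ∀ x y, ν (x + y) ≤ ν x + ν y)
    (hmix : ∀ x, ‖x‖ = ‖ν x‖) :
    CompleteSpace X ↔ ∀ u : ℕ → X, EUnifCauchy ν u → ∃ x, EUnifConv ν u x := by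
  have hν0 : ν 0 = 0 := by
    have := hsmul 0 0
    simpa using this
  have hneg : ∀ y : X, ν (-y) = ν y := by
    intro y
    have := hsmul (-1) y
    simpa using this
  have hnn : ∀ (c : ℝ) (x : X), 0 ≤ c → 0 ≤ c • ν x := by
    intro c x hc
    have : c • ν x = ν (c • x) := by rw [hsmul, abs_of_nonneg hc]
    rw [this]; exact hpos _
  have hone : ∀ (c : ℝ) (x : X), 1 ≤ c → ν x ≤ c • ν x := by
    intro c x hc
    have h1 : 0 ≤ (c - 1) • ν x := hnn _ _ (by linarith)
    have : c • ν x = ν x + (c - 1) • ν x := by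
      rw [sub_smul, one_smul]; abel
    rw [this]
    simpa using h1
  have hsolid : ∀ (z : X) (a : E), ν z ≤ a → ‖ν z‖ ≤ ‖a‖ := by
    intro z a h
    refine HasSolidNorm.solid ?_
    rw [abs_of_nonneg (hpos z)]
    exact h.trans (le_abs_self a)
  constructor
  · rintro hX u ⟨e, he, hc⟩
    have hcs : CauchySeq u := by
      rw [Metric.cauchySeq_iff]
      intro ε hε
      have hd : (0:ℝ) < ε / (‖e‖ + 1) := by positivity
      obtain ⟨N, hN⟩ := hc (ε / (‖e‖ + 1)) hd
      refine ⟨N, fun m hm n hn => ?_⟩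
      have h1 : ‖ν (u m - u n)‖ ≤ ‖(ε / (‖e‖ + 1)) • e‖ := hsolid _ _ (hN m hm n hn)
      rw [dist_eq_norm, hmix]
      calc ‖ν (u m - u n)‖ ≤ ‖(ε / (‖e‖ + 1)) • e‖ := h1
        _ = (ε / (‖e‖ + 1)) * ‖e‖ := by
            rw [norm_smul, Real.norm_eq_abs, abs_of_nonneg hd.le]
        _ < ε := by
            rw [div_mul_eq_mul_div, div_lt_iff₀ (by positivity)]
            nlinarith [norm_nonneg e]
    obtain ⟨x, hx⟩ := cauchySeq_tendsto_of_complete hcs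
    refine ⟨x, e, he, fun ε hε => ?_⟩
    obtain ⟨N, hN⟩ := hc ε hε
    refine ⟨N, fun n hn => ?_⟩
    have hlim0 : Filter.Tendsto (fun m => ν (x - u m)) Filter.atTop (nhds 0) := by
      rw [tendsto_zero_iff_norm_tendsto_zero]
      have h1 : Filter.Tendsto (fun m => dist (u m) x) Filter.atTop (nhds 0) :=
        tendsto_iff_dist_tendsto_zero.mp hx
      convert h1 using 2 with m
      rw [← hmix, dist_eq_norm, norm_sub_rev]
    have hlim : Filter.Tendsto (fun m => ν (x - u m) + ε • e) Filter.atTop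
        (nhds (0 + ε • e)) := hlim0.add tendsto_const_nhds
    have hev : ∀ᶠ m in Filter.atTop, ν (x - u n) ≤ ν (x - u m) + ε • e := by
      refine Filter.eventually_atTop.mpr ⟨N, fun m hm => ?_⟩
      have h2 : x - u n = (x - u m) + (u m - u n) := by abel
      calc ν (x - u n) = ν ((x - u m) + (u m - u n)) := by rw [← h2]
        _ ≤ ν (x - u m) + ν (u m - u n) := htri _ _
        _ ≤ ν (x - u m) + ε • e := add_le_add_right (hN m hm n hn) _
    have := ge_of_tendsto hlim hev
    simpa using this
  · intro H
    apply Metric.complete_of_cauchySeq_tendsto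
    intro u hu
    obtain ⟨φ, hφ, hfast⟩ := hu.subseq_mem
      (V := fun n => {p : X × X | dist p.1 p.2 < (4:ℝ)⁻¹ ^ n})
      (fun n => Metric.dist_mem_uniformity (by positivity))
    set v : ℕ → X := u ∘ φ with hv
    set d : ℕ → X := fun k => v (k + 1) - v k with hd
    have hdk : ∀ k, ‖ν (d k)‖ ≤ (4:ℝ)⁻¹ ^ k := by
      intro k
      rw [← hmix]
      have := hfast k
      simp only [Set.mem_setOf_eq] at this
      rw [dist_eq_norm] at this
      exact this.le
    have hsum : Summable (fun k => (2:ℝ) ^ k • ν (d k)) := by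
      refine Summable.of_norm_bounded (g := fun k => (2:ℝ)⁻¹ ^ k)
        (summable_geometric_of_lt_one (by norm_num) (by norm_num)) (fun k => ?_)
      rw [norm_smul, Real.norm_eq_abs, abs_of_nonneg (by positivity)]
      calc (2:ℝ) ^ k * ‖ν (d k)‖ ≤ (2:ℝ) ^ k * (4:ℝ)⁻¹ ^ k :=
            mul_le_mul_of_nonneg_left (hdk k) (by positivity)
        _ = (2:ℝ)⁻¹ ^ k := by
            rw [← mul_pow]; norm_num
    set e : E := ∑' k, (2:ℝ) ^ k • ν (d k) with he_def
    have he : 0 ≤ e := tsum_nonneg (fun k => hnn _ _ (by positivity))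
    have htel : ∀ n m, n ≤ m → ν (v m - v n) ≤ ∑ j ∈ Finset.Ico n m, ν (d j) := by
      intro n m hnm
      induction m, hnm using Nat.le_induction with
      | base => simp [hν0]
      | succ m hm ih =>
          have h2 : v (m + 1) - v n = d m + (v m - v n) := by
            simp only [hd]; abel
          rw [h2, Finset.sum_Ico_succ_top hm]
          calc ν (d m + (v m - v n)) ≤ ν (d m) + ν (v m - v n) := htri _ _
            _ ≤ ν (d m) + ∑ j ∈ Finset.Ico n m, ν (d j) := add_le_add_right ih _
            _ = (∑ j ∈ Finset.Ico n m, ν (d j)) + ν (d m) := add_comm _ _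
    -- key: for ε > 0 with 1 ≤ ε * 2^n, finite sums of ν (d j) over Ico n m are ≤ ε • e
    have hkey : ∀ (ε : ℝ), 0 < ε → ∀ n m : ℕ, 1 ≤ ε * 2 ^ n →
        (∑ j ∈ Finset.Ico n m, ν (d j)) ≤ ε • e := by
      intro ε hε n m hn
      have hsum' : Summable (fun k => (ε * 2 ^ k) • ν (d k)) := by
        have := hsum.const_smul ε
        simpa [smul_smul] using this
      have hεe : ε • e = ∑' k, (ε * 2 ^ k) • ν (d k) := by
        rw [he_def, ← (hsum.hasSum.const_smul ε).tsum_eq]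
        congr 1; funext k; rw [smul_smul]
      rw [hεe]
      calc (∑ j ∈ Finset.Ico n m, ν (d j))
          ≤ ∑ j ∈ Finset.Ico n m, (ε * 2 ^ j) • ν (d j) := by
            refine Finset.sum_le_sum (fun j hj => ?_)
            have hj' : n ≤ j := (Finset.mem_Ico.mp hj).1
            refine hone _ _ ?_
            calc (1:ℝ) ≤ ε * 2 ^ n := hn
              _ ≤ ε * 2 ^ j := by
                  have := pow_le_pow_right₀ (by norm_num : (1:ℝ) ≤ 2) hj'
                  nlinarith
        _ ≤ ∑' k, (ε * 2 ^ k) • ν (d k) :=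
            Summable.sum_le_tsum _ (fun k _ => hnn _ _ (by positivity)) hsum'
    have hvC : EUnifCauchy ν v := by
      refine ⟨e, he, fun ε hε => ?_⟩
      obtain ⟨N, hN⟩ := exists_pow_lt_of_lt_one hε (by norm_num : (2:ℝ)⁻¹ < 1)
      have hN1 : 1 ≤ ε * 2 ^ N := by
        have h2 : (0:ℝ) < 2 ^ N := by positivity
        rw [inv_pow] at hN
        have h4 := mul_lt_mul_of_pos_right hN h2
        rw [inv_mul_cancel₀ (ne_of_gt h2)] at h4
        linarith
      refine ⟨N, fun m hm n hn => ?_⟩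
      rcases le_total n m with h | h
      · calc ν (v m - v n) ≤ ∑ j ∈ Finset.Ico n m, ν (d j) := htel n m h
          _ ≤ ε • e := by
              refine hkey ε hε n m ?_
              calc (1:ℝ) ≤ ε * 2 ^ N := hN1
                _ ≤ ε * 2 ^ n := by
                    have := pow_le_pow_right₀ (by norm_num : (1:ℝ) ≤ 2) hn
                    nlinarith
      · have h3 : ν (v m - v n) = ν (v n - v m) := by
          rw [← hneg (v n - v m)]; congr 1; abel
        rw [h3]
        calc ν (v n - v m) ≤ ∑ j ∈ Finset.Ico m n, ν (d j) := htel m n h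
          _ ≤ ε • e := by
              refine hkey ε hε m n ?_
              calc (1:ℝ) ≤ ε * 2 ^ N := hN1
                _ ≤ ε * 2 ^ m := by
                    have := pow_le_pow_right₀ (by norm_num : (1:ℝ) ≤ 2) hm
                    nlinarith
    obtain ⟨x, e', he', hconv⟩ := H v hvC
    refine ⟨x, ?_⟩
    have hvx : Filter.Tendsto v Filter.atTop (nhds x) := by
      rw [Metric.tendsto_atTop]
      intro ε hε
      have hd2 : (0:ℝ) < ε / (‖e'‖ + 1) := by positivity
      obtain ⟨N, hN⟩ := hconv (ε / (‖e'‖ + 1)) hd2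
      refine ⟨N, fun n hn => ?_⟩
      have h1 : ‖ν (x - v n)‖ ≤ ‖(ε / (‖e'‖ + 1)) • e'‖ := hsolid _ _ (hN n hn)
      calc dist (v n) x = ‖x - v n‖ := by rw [dist_eq_norm, norm_sub_rev]
        _ = ‖ν (x - v n)‖ := hmix _
        _ ≤ ‖(ε / (‖e'‖ + 1)) • e'‖ := h1
        _ = (ε / (‖e'‖ + 1)) * ‖e'‖ := by
            rw [norm_smul, Real.norm_eq_abs, abs_of_nonneg hd2.le]
        _ < ε := by
            rw [div_mul_eq_mul_div, div_lt_iff₀ (by positivity)]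
            nlinarith [norm_nonneg e']
    exact tendsto_nhds_of_cauchySeq_of_subseq hu hφ.tendsto_atTop hvx
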